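/- In a DAG, if node v is intervened upon (hard intervention setting X_v to a fixed value distribution independent of its parents), then in the resulting interventional distribution, X_v is independent of every non-descendant of v. Concretely for the factorized finite discrete model: if q(x_v | x_{PA_v}) = r(x_v) does not depend on the parent values, then under the interventional distribution, the marginal of (X_v, X_u) for any u that is not a descendant of v in G factorizes as the product of the marginal of X_v and the marginal of X_u. -/

import Mathlib

section Helpers

variable {n : ℕ} {S : Fin n → Type} [∀ j, Fintype (S j)] [∀ j, DecidableEq (S j)]

/-- If `h` does not depend on coordinate `m`, the sum over configurations with
`x m = a` equals the sum over configurations with `x m = b`. -/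
private lemma coord_inv (m : Fin n) (h : ((k : Fin n) → S k) → ℝ)
    (hh : ∀ x (a : S m), h (Function.update x m a) = h x) (a b : S m) :
    (∑ x : (k : Fin n) → S k, if x m = a then h x else 0)
      = ∑ x : (k : Fin n) → S k, if x m = b then h x else 0 := by
  rw [← Finset.sum_filter, ← Finset.sum_filter]
  refine Finset.sum_nbij' (fun x => Function.update x m b) (fun x => Function.update x m a)
    ?_ ?_ ?_ ?_ ?_
  · intro x hx; simp [Function.update_self]
  · intro x hx; simp [Function.update_self]
  · intro x hx
    simp only [Finset.mem_filter, Finset.mem_univ, true_and] at hx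
    funext k
    by_cases hk : k = m
    · subst hk; simp [Function.update_self, hx]
    · simp [Function.update_of_ne hk]
  · intro x hx
    simp only [Finset.mem_filter, Finset.mem_univ, true_and] at hx
    funext k
    by_cases hk : k = m
    · subst hk; simp [Function.update_self, hx]
    · simp [Function.update_of_ne hk]
  · intro x hx; exact (hh x b).symm

/-- If `f` does not depend on coordinate `m`, the full sum is `card (S m)`
times the sum over configurations with `x m = b`. -/
private lemma sum_eq_card_mul (m : Fin n) (f : ((k : Fin n) → S k) → ℝ)
    (hf : ∀ x (a : S m), f (Function.update x m a) = f x) (b : S m) :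
    ∑ x : (k : Fin n) → S k, f x
      = (Fintype.card (S m) : ℝ) * ∑ x : (k : Fin n) → S k, if x m = b then f x else 0 := by
  have h1 : ∑ x : (k : Fin n) → S k, f x
      = ∑ x : (k : Fin n) → S k, ∑ a : S m, if x m = a then f x else 0 := by
    refine Finset.sum_congr rfl fun x _ => ?_
    simp [Finset.sum_ite_eq]
  rw [h1, Finset.sum_comm]
  have h2 : ∀ a : S m, (∑ x : (k : Fin n) → S k, if x m = a then f x else 0)
      = ∑ x : (k : Fin n) → S k, if x m = b then f x else 0 :=
    fun a => coord_inv m f hf a b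
  rw [Finset.sum_congr rfl (fun a _ => h2 a)]
  simp [Finset.sum_const, nsmul_eq_mul, Finset.card_univ]

/-- Summing out a maximal coordinate `m` against its kernel. -/
private lemma sum_out (m : Fin n) (pm : ((k : Fin n) → S k) → S m → ℝ)
    (hpm : ∀ x (a : S m), pm (Function.update x m a) = pm x)
    (hpsum : ∀ x, ∑ a : S m, pm x a = 1)
    (G : ((k : Fin n) → S k) → ℝ)
    (hG : ∀ x (a : S m), G (Function.update x m a) = G x)
    (hne : Nonempty (S m)) :
    ∑ x : (k : Fin n) → S k, G x * pm x (x m)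
      = (Fintype.card (S m) : ℝ)⁻¹ * ∑ x : (k : Fin n) → S k, G x := by
  obtain ⟨b⟩ := hne
  have h1 : ∑ x : (k : Fin n) → S k, G x * pm x (x m)
      = ∑ a : S m, ∑ x : (k : Fin n) → S k, if x m = a then G x * pm x a else 0 := by
    rw [Finset.sum_comm]
    refine Finset.sum_congr rfl fun x _ => ?_
    simp [Finset.sum_ite_eq]
  have h2 : ∀ a : S m, (∑ x : (k : Fin n) → S k, if x m = a then G x * pm x a else 0)
      = ∑ x : (k : Fin n) → S k, if x m = b then G x * pm x a else 0 := by
    intro a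
    exact coord_inv m (fun x => G x * pm x a)
      (fun x c => by
        show G (Function.update x m c) * pm (Function.update x m c) a = G x * pm x a
        rw [hG, hpm]) a b
  have h3 : ∑ x : (k : Fin n) → S k, G x * pm x (x m)
      = ∑ x : (k : Fin n) → S k, if x m = b then G x else 0 := by
    rw [h1, Finset.sum_congr rfl (fun a _ => h2 a), Finset.sum_comm]
    refine Finset.sum_congr rfl fun x _ => ?_
    by_cases hx : x m = b
    · simp only [hx, if_true, ← Finset.mul_sum, hpsum x, mul_one]
    · simp [hx]
  have h4 := sum_eq_card_mul m G hG b
  have h0 : 0 < Fintype.card (S m) := Fintype.card_pos_iff.mpr ⟨b⟩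
  have hcard : (Fintype.card (S m) : ℝ) ≠ 0 := by exact_mod_cast h0.ne'
  rw [h3, h4, inv_mul_cancel_left₀ hcard]

/-- Master lemma: sum out all kernels in `T` against a function `F` that does
not depend on the coordinates in `T`. -/
private lemma master (PA : Fin n → Finset (Fin n)) (hacyc : ∀ j, ∀ k ∈ PA j, k < j)
    (p : ∀ j : Fin n, ((k : Fin n) → S k) → S j → ℝ)
    (hdep : ∀ j, ∀ x y : (k : Fin n) → S k, (∀ k ∈ PA j, x k = y k) → p j x = p j y)
    (hsum : ∀ j x, ∑ s : S j, p j x s = 1)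
    (hne : ∀ k, Nonempty (S k)) :
    ∀ (N : ℕ) (T : Finset (Fin n)), T.card = N →
      ∀ F : ((k : Fin n) → S k) → ℝ,
        (∀ (x : (k : Fin n) → S k) (m : Fin n) (a : S m), m ∈ T →
            F (Function.update x m a) = F x) →
        ∑ x : (k : Fin n) → S k, F x * ∏ j ∈ T, p j x (x j)
          = (∏ j ∈ T, (Fintype.card (S j) : ℝ))⁻¹ * ∑ x : (k : Fin n) → S k, F x := by
  intro N
  induction N with
  | zero =>
    intro T hT F hF
    rw [Finset.card_eq_zero] at hT
    subst hT
    simp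
  | succ N ih =>
    intro T hT F hF
    have hTne : T.Nonempty := Finset.card_pos.mp (by omega)
    set m := T.max' hTne with hm
    have hmT : m ∈ T := T.max'_mem hTne
    -- no j ∈ T.erase m has m as a parent
    have hnotpa : ∀ j ∈ T.erase m, m ∉ PA j := by
      intro j hj hmem
      have hjT := Finset.mem_of_mem_erase hj
      have hjm := Finset.ne_of_mem_erase hj
      have h1 : m < j := hacyc j m hmem
      have h2 : j ≤ m := Finset.le_max' T j hjT
      exact absurd (lt_of_lt_of_le h1 h2) (lt_irrefl m)
    have hmm : m ∉ PA m := fun hmem => absurd (hacyc m m hmem) (lt_irrefl m)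
    have hpupd : ∀ (j : Fin n), m ∉ PA j → ∀ x (a : S m),
        p j (Function.update x m a) = p j x := by
      intro j hj x a
      refine hdep j _ _ fun k hk => ?_
      refine Function.update_of_ne (fun h => hj (by rw [← h]; exact hk)) _ _
    set G : ((k : Fin n) → S k) → ℝ := fun x => F x * ∏ j ∈ T.erase m, p j x (x j) with hGdef
    have hGinv : ∀ x (a : S m), G (Function.update x m a) = G x := by
      intro x a
      simp only [hGdef]
      rw [hF _ _ _ hmT]
      congr 1
      refine Finset.prod_congr rfl fun j hj => ?_
      rw [hpupd j (hnotpa j hj) x a,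
        Function.update_of_ne (Finset.ne_of_mem_erase hj) _ _]
    have hstep : ∑ x : (k : Fin n) → S k, F x * ∏ j ∈ T, p j x (x j)
        = ∑ x : (k : Fin n) → S k, G x * p m x (x m) := by
      refine Finset.sum_congr rfl fun x _ => ?_
      rw [hGdef]
      rw [← Finset.mul_prod_erase T _ hmT]
      ring
    rw [hstep, sum_out m (p m) (hpupd m hmm) (hsum m) G hGinv (hne m)]
    have hcard : (T.erase m).card = N := by
      rw [Finset.card_erase_of_mem hmT, hT]
      omega
    have hFinv' : ∀ (x : (k : Fin n) → S k) (m' : Fin n) (a : S m'), m' ∈ T.erase m →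
        F (Function.update x m' a) = F x :=
      fun x m' a hm' => hF x m' a (Finset.mem_of_mem_erase hm')
    rw [show (∑ x : (k : Fin n) → S k, G x)
        = ∑ x : (k : Fin n) → S k, F x * ∏ j ∈ T.erase m, p j x (x j) from rfl]
    rw [ih (T.erase m) hcard F hFinv']
    rw [← Finset.mul_prod_erase T _ hmT, mul_inv]
    ring

end Helpers

/-- after a hard intervention on node `v` (its kernel replaced by
a fixed distribution `r` independent of parents), `X v` is independent of
`X u` for every non-descendant `u ≠ v` of `v`: the joint marginal of
`(X v, X u)` factorizes. -/
theorem hard_intervention_indep_nondescendant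
    (n : ℕ) (S : Fin n → Type) [∀ j, Fintype (S j)] [∀ j, DecidableEq (S j)]
    (PA : Fin n → Finset (Fin n))
    (hacyc : ∀ j, ∀ k ∈ PA j, k < j)  -- topological ordering of the DAG
    (p : ∀ j : Fin n, ((k : Fin n) → S k) → S j → ℝ)
    (hdep : ∀ j, ∀ x y : (k : Fin n) → S k,
      (∀ k ∈ PA j, x k = y k) → p j x = p j y)
    (hnonneg : ∀ j x s, 0 ≤ p j x s)
    (hsum : ∀ j x, ∑ s : S j, p j x s = 1)
    (v : Fin n) (r : S v → ℝ)
    (hrnonneg : ∀ s, 0 ≤ r s) (hrsum : ∑ s : S v, r s = 1)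
    (u : Fin n) (huv : u ≠ v)
    (hnondesc : ¬ Relation.TransGen (fun a b => a ∈ PA b) v u) :
    ∀ (s : S v) (t : S u),
      -- interventional distribution P_v
      (∑ x : (k : Fin n) → S k,
          if x v = s ∧ x u = t then
            r (x v) * ∏ j ∈ Finset.univ.erase v, p j x (x j) else 0)
      = (∑ x : (k : Fin n) → S k,
          if x v = s then
            r (x v) * ∏ j ∈ Finset.univ.erase v, p j x (x j) else 0)
        * (∑ x : (k : Fin n) → S k,
          if x u = t then
            r (x v) * ∏ j ∈ Finset.univ.erase v, p j x (x j) else 0) := by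
  classical
  intro s t
  by_cases hne : ∀ k, Nonempty (S k)
  case neg =>
    push_neg at hne
    obtain ⟨k, hk⟩ := hne
    have : IsEmpty ((k : Fin n) → S k) :=
      ⟨fun f => hk.false (f k)⟩
    simp [Finset.univ_eq_empty]
  case pos =>
  -- descendants of v
  set TG := Relation.TransGen (fun a b : Fin n => a ∈ PA b) with hTG
  have hTGlt : ∀ j, TG v j → v < j := by
    intro j hj
    induction hj with
    | single h => exact hacyc _ _ h
    | tail _ h ih => exact lt_trans ih (hacyc _ _ h)
  set D : Finset (Fin n) := Finset.univ.filter (fun j => TG v j) with hD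
  have hDmem : ∀ j, j ∈ D ↔ TG v j := by
    intro j; simp [hD]
  have hDsub : D ⊆ Finset.univ.erase v := by
    intro j hj
    exact Finset.mem_erase.mpr ⟨Fin.ne_of_gt (hTGlt j ((hDmem j).mp hj)), Finset.mem_univ j⟩
  set Nset : Finset (Fin n) := Finset.univ.erase v \ D with hNdef
  have hsplit : ∀ (f : Fin n → ℝ), (∏ j ∈ Nset, f j) * ∏ j ∈ D, f j
      = ∏ j ∈ Finset.univ.erase v, f j := fun f => Finset.prod_sdiff hDsub
  have hvD : v ∉ D := fun h => absurd (hTGlt v ((hDmem v).mp h)) (lt_irrefl v)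
  have huD : u ∉ D := fun h => hnondesc ((hDmem u).mp h)
  -- parents of nodes in Nset are not in D and are not v
  have hNpa : ∀ j ∈ Nset, ∀ m, m ∈ PA j → m ∉ D ∧ m ≠ v → True := fun _ _ _ _ _ => trivial
  have hNsetD : ∀ j ∈ Nset, ∀ m ∈ D, m ∉ PA j := by
    intro j hj m hm hmem
    have hjD : j ∈ D := (hDmem j).mpr (Relation.TransGen.tail ((hDmem m).mp hm) hmem)
    exact (Finset.mem_sdiff.mp hj).2 hjD
  have hNsetv : ∀ j ∈ Nset, v ∉ PA j := by
    intro j hj hmem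
    have hjD : j ∈ D := (hDmem j).mpr (Relation.TransGen.single hmem)
    exact (Finset.mem_sdiff.mp hj).2 hjD
  have hNnev : ∀ j ∈ Nset, j ≠ v := fun j hj =>
    Finset.ne_of_mem_erase (Finset.mem_sdiff.mp hj).1
  -- the product over Nset is invariant under updating coordinates in D or at v
  have hprodNinv : ∀ (m : Fin n), (m ∈ D ∨ m = v) → ∀ x (a : S m),
      (∏ j ∈ Nset, p j (Function.update x m a) ((Function.update x m a) j))
        = ∏ j ∈ Nset, p j x (x j) := by
    intro m hm x a
    refine Finset.prod_congr rfl fun j hj => ?_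
    have hjm : j ≠ m := by
      rcases hm with hm | hm
      · intro h; exact (Finset.mem_sdiff.mp hj).2 (h ▸ hm)
      · exact hm ▸ hNnev j hj
    have hmpa : m ∉ PA j := by
      rcases hm with hm | hm
      · exact hNsetD j hj m hm
      · exact hm ▸ hNsetv j hj
    rw [Function.update_of_ne hjm _ _,
      hdep j (Function.update x m a) x
        (fun k hk => Function.update_of_ne (fun h => hmpa (by rw [← h]; exact hk)) _ _)]
  -- abbreviations
  set Pi : ℝ := ∏ j ∈ D, (Fintype.card (S j) : ℝ) with hPi
  set K1 : ℝ := ∑ x : (k : Fin n) → S k,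
      if x v = s ∧ x u = t then ∏ j ∈ Nset, p j x (x j) else 0 with hK1
  -- Sum 1 (joint)
  have hSum1 : (∑ x : (k : Fin n) → S k,
      if x v = s ∧ x u = t then r (x v) * ∏ j ∈ Finset.univ.erase v, p j x (x j) else 0)
      = Pi⁻¹ * (r s * K1) := by
    have e1 : ∀ x : (k : Fin n) → S k,
        (if x v = s ∧ x u = t then r (x v) * ∏ j ∈ Finset.univ.erase v, p j x (x j) else 0)
        = (if x v = s ∧ x u = t then r (x v) * ∏ j ∈ Nset, p j x (x j) else 0)
            * ∏ j ∈ D, p j x (x j) := by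
      intro x
      split_ifs with h
      · rw [← hsplit (fun j => p j x (x j))]; ring
      · rw [zero_mul]
    rw [Finset.sum_congr rfl (fun x _ => e1 x)]
    rw [master PA hacyc p hdep hsum hne D.card D rfl _ ?_]
    · congr 1
      rw [hK1, Finset.mul_sum]
      refine Finset.sum_congr rfl fun x _ => ?_
      split_ifs with h
      · rw [h.1]
      · rw [mul_zero]
    · intro x m a hm
      have hmv : m ≠ v := fun h => hvD (h ▸ hm)
      have hmu : m ≠ u := fun h => huD (h ▸ hm)
      rw [Function.update_of_ne (Ne.symm hmv) _ _, Function.update_of_ne (Ne.symm hmu) _ _,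
        hprodNinv m (Or.inl hm) x a]
  -- Sum 2 (marginal of v) equals r s
  have hcardpos : ∀ k, (Fintype.card (S k) : ℝ) ≠ 0 := by
    intro k
    have := Fintype.card_pos (α := S k)
    positivity
  have hSum2 : (∑ x : (k : Fin n) → S k,
      if x v = s then r (x v) * ∏ j ∈ Finset.univ.erase v, p j x (x j) else 0) = r s := by
    have e1 : ∀ x : (k : Fin n) → S k,
        (if x v = s then r (x v) * ∏ j ∈ Finset.univ.erase v, p j x (x j) else 0)
        = (if x v = s then r (x v) else 0) * ∏ j ∈ Finset.univ.erase v, p j x (x j) := by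
      intro x
      split_ifs with h
      · rfl
      · rw [zero_mul]
    rw [Finset.sum_congr rfl (fun x _ => e1 x)]
    rw [master PA hacyc p hdep hsum hne (Finset.univ.erase v).card (Finset.univ.erase v) rfl _ ?_]
    · -- compute  ∑ x, if x v = s then r (x v) else 0
      have e2 : (∑ x : (k : Fin n) → S k, if x v = s then r (x v) else 0)
          = r s * ∑ x : (k : Fin n) → S k, if x v = s then (1 : ℝ) else 0 := by
        rw [Finset.mul_sum]
        refine Finset.sum_congr rfl fun x _ => ?_
        split_ifs with h
        · rw [h, mul_one]
        · rw [mul_zero]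
      have e3 : (Fintype.card (S v) : ℝ) * (∑ x : (k : Fin n) → S k, if x v = s then (1 : ℝ) else 0)
          = ∏ j, (Fintype.card (S j) : ℝ) := by
        rw [← sum_eq_card_mul v (fun _ => (1 : ℝ)) (fun _ _ => rfl) s]
        rw [Finset.sum_const, Finset.card_univ, nsmul_eq_mul, mul_one]
        rw [← Nat.cast_prod]
        congr 1
        rw [← Fintype.card_pi]
      have e4 : (∏ j, (Fintype.card (S j) : ℝ))
          = (Fintype.card (S v) : ℝ) * ∏ j ∈ Finset.univ.erase v, (Fintype.card (S j) : ℝ) :=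
        (Finset.mul_prod_erase Finset.univ _ (Finset.mem_univ v)).symm
      have e5 : (∑ x : (k : Fin n) → S k, if x v = s then (1 : ℝ) else 0)
          = ∏ j ∈ Finset.univ.erase v, (Fintype.card (S j) : ℝ) := by
        have h := e3
        rw [e4] at h
        exact mul_left_cancel₀ (hcardpos v) h
      have hprodne : (∏ j ∈ Finset.univ.erase v, (Fintype.card (S j) : ℝ)) ≠ 0 :=
        Finset.prod_ne_zero_iff.mpr fun j _ => hcardpos j
      rw [e2, e5, mul_comm (r s), ← mul_assoc, inv_mul_cancel₀ hprodne, one_mul]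
    · intro x m a hm
      have hmv : m ≠ v := Finset.ne_of_mem_erase hm
      rw [Function.update_of_ne (Ne.symm hmv) _ _]
  -- Sum 3 (marginal of u)
  have hSum3 : (∑ x : (k : Fin n) → S k,
      if x u = t then r (x v) * ∏ j ∈ Finset.univ.erase v, p j x (x j) else 0)
      = Pi⁻¹ * K1 := by
    have e1 : ∀ x : (k : Fin n) → S k,
        (if x u = t then r (x v) * ∏ j ∈ Finset.univ.erase v, p j x (x j) else 0)
        = (if x u = t then r (x v) * ∏ j ∈ Nset, p j x (x j) else 0)
            * ∏ j ∈ D, p j x (x j) := by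
      intro x
      split_ifs with h
      · rw [← hsplit (fun j => p j x (x j))]; ring
      · rw [zero_mul]
    rw [Finset.sum_congr rfl (fun x _ => e1 x)]
    rw [master PA hacyc p hdep hsum hne D.card D rfl _ ?_]
    · congr 1
      -- ∑ x, if x u = t then r (x v) * ∏N else 0 = K1
      set G : ((k : Fin n) → S k) → ℝ :=
        fun x => if x u = t then ∏ j ∈ Nset, p j x (x j) else 0 with hGdef
      have hGinv : ∀ x (a : S v), G (Function.update x v a) = G x := by
        intro x a
        simp only [hGdef]
        rw [Function.update_of_ne huv _ _, hprodNinv v (Or.inr rfl) x a]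
      have e2 : (∑ x : (k : Fin n) → S k,
          if x u = t then r (x v) * ∏ j ∈ Nset, p j x (x j) else 0)
          = ∑ x : (k : Fin n) → S k, r (x v) * G x := by
        refine Finset.sum_congr rfl fun x _ => ?_
        simp only [hGdef]
        split_ifs with h
        · rfl
        · rw [mul_zero]
      rw [e2]
      have e3 : (∑ x : (k : Fin n) → S k, r (x v) * G x)
          = ∑ x : (k : Fin n) → S k, ∑ a : S v, if x v = a then r a * G x else 0 := by
        refine Finset.sum_congr rfl fun x _ => ?_
        rw [show (∑ a : S v, if x v = a then r a * G x else 0)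
            = if x v ∈ Finset.univ then r (x v) * G x else 0 from
          Finset.sum_ite_eq Finset.univ (x v) (fun a => r a * G x)]
        simp
      rw [e3, Finset.sum_comm]
      have e4 : ∀ a : S v, (∑ x : (k : Fin n) → S k, if x v = a then r a * G x else 0)
          = r a * ∑ x : (k : Fin n) → S k, if x v = s then G x else 0 := by
        intro a
        rw [coord_inv v (fun x => r a * G x)
          (fun x c => by
            show r a * G (Function.update x v c) = r a * G x
            rw [hGinv]) a s, Finset.mul_sum]
        refine Finset.sum_congr rfl fun x _ => ?_
        split_ifs with h
        · rfl
        · rw [mul_zero]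
      rw [Finset.sum_congr rfl (fun a _ => e4 a), ← Finset.sum_mul, hrsum, one_mul]
      -- ∑ x, if x v = s then G x else 0 = K1
      rw [hK1]
      refine Finset.sum_congr rfl fun x _ => ?_
      simp only [hGdef]
      by_cases h1 : x v = s <;> by_cases h2 : x u = t <;> simp [h1, h2]
    · intro x m a hm
      have hmu : m ≠ u := fun h => huD (h ▸ hm)
      have hmv : m ≠ v := fun h => hvD (h ▸ hm)
      rw [Function.update_of_ne (Ne.symm hmu) _ _, Function.update_of_ne (Ne.symm hmv) _ _,
        hprodNinv m (Or.inl hm) x a]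
  rw [hSum1, hSum2, hSum3]
  ring
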